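/- For a planar 4-web with structure equations dω_i = ω_i∧θ, dθ = Kω₁∧ω₂, basic invariant a (a ≠ 0,1) with da = a₁ω₁ + a₂ω₂: the 1-form θ₁₂₄ := θ − (a₂/a)ω₂ satisfies dθ₁₂₄ = K₁₂₄ · a ω₁∧ω₂ where K₁₂₄ = (1/a)(K − a₁₂/a + a₁a₂/a²), given the second-order relations ∇a₁ = a₁₁ω₁ + a₁₂ω₂, ∇a₂ = a₁₂ω₁ + a₂₂ω₂ (∇a_i = da_i − a_iθ). -/

import Mathlib

/-!
Chart-level formalization of planar web geometry: the 2-manifold is (an open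
subset `U` of) `V = ℝ × ℝ`; 1-forms are smooth maps `V → (V →L[ℝ] ℝ)`;
`dOne` is the exterior derivative of a 1-form and `wedge` the wedge product
of two 1-forms, both evaluated at a point on a pair of tangent vectors.
-/

noncomputable section

abbrev V : Type := ℝ × ℝ

abbrev OneForm : Type := V → (V →L[ℝ] ℝ)

/-- Exterior derivative of a 1-form, evaluated at `x` on vectors `u, v`. -/
def dOne (ω : OneForm) : V → V → V → ℝ :=
  fun x u v => (fderiv ℝ ω x u) v - (fderiv ℝ ω x v) u

/-- Wedge product of two 1-forms, evaluated at `x` on vectors `u, v`. -/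
def wedge (ω η : OneForm) : V → V → V → ℝ :=
  fun x u v => ω x u * η x v - ω x v * η x u

/-- the connection form `θ₁₂₄ = θ − (a₂/a)ω₂` of the 3-subweb
[1,2,4] has curvature `K₁₂₄ = (1/a)(K − a₁₂/a + a₁a₂/a²)`:
`dθ₁₂₄ = a·K₁₂₄·ω₁∧ω₂`. -/
theorem curvature_of_subweb_124
    (U : Set V) (hU : IsOpen U) (ω₁ ω₂ θ : OneForm)
    (K a a₁ a₂ a₁₁ a₁₂ a₂₂ : V → ℝ)
    (hω₁ : ContDiffOn ℝ (⊤ : ℕ∞) ω₁ U) (hω₂ : ContDiffOn ℝ (⊤ : ℕ∞) ω₂ U)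
    (hθ : ContDiffOn ℝ (⊤ : ℕ∞) θ U) (hK : ContDiffOn ℝ (⊤ : ℕ∞) K U)
    (ha : ContDiffOn ℝ (⊤ : ℕ∞) a U)
    (ha₁ : ContDiffOn ℝ (⊤ : ℕ∞) a₁ U) (ha₂ : ContDiffOn ℝ (⊤ : ℕ∞) a₂ U)
    (hcof : ∀ x ∈ U, ∃ u v : V, wedge ω₁ ω₂ x u v ≠ 0)
    (ha0 : ∀ x ∈ U, a x ≠ 0) (ha1 : ∀ x ∈ U, a x ≠ 1)
    (hs₁ : ∀ x ∈ U, ∀ u v : V, dOne ω₁ x u v = wedge ω₁ θ x u v)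
    (hs₂ : ∀ x ∈ U, ∀ u v : V, dOne ω₂ x u v = wedge ω₂ θ x u v)
    (hdθ : ∀ x ∈ U, ∀ u v : V, dOne θ x u v = K x * wedge ω₁ ω₂ x u v)
    (hda : ∀ x ∈ U, ∀ u : V,
      fderiv ℝ a x u = a₁ x * ω₁ x u + a₂ x * ω₂ x u)
    (hda₁ : ∀ x ∈ U, ∀ u : V,
      fderiv ℝ a₁ x u - a₁ x * θ x u = a₁₁ x * ω₁ x u + a₁₂ x * ω₂ x u)
    (hda₂ : ∀ x ∈ U, ∀ u : V,
      fderiv ℝ a₂ x u - a₂ x * θ x u = a₁₂ x * ω₁ x u + a₂₂ x * ω₂ x u) :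
    ∀ x ∈ U, ∀ u v : V,
      dOne (fun y => θ y - (a₂ y / a y) • ω₂ y) x u v
        = a x * ((1 / a x) * (K x - a₁₂ x / a x + a₁ x * a₂ x / (a x)^2))
            * wedge ω₁ ω₂ x u v := by
  intro x hx u v
  have hnx : U ∈ nhds x := hU.mem_nhds hx
  have dθx : DifferentiableAt ℝ θ x := ((hθ x hx).contDiffAt hnx).differentiableAt (by simp)
  have dω₂x : DifferentiableAt ℝ ω₂ x := ((hω₂ x hx).contDiffAt hnx).differentiableAt (by simp)
  have dax : DifferentiableAt ℝ a x := ((ha x hx).contDiffAt hnx).differentiableAt (by simp)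
  have da₂x : DifferentiableAt ℝ a₂ x := ((ha₂ x hx).contDiffAt hnx).differentiableAt (by simp)
  have ha0x : a x ≠ 0 := ha0 x hx
  have hgx : DifferentiableAt ℝ (fun y => a₂ y / a y) x := by
    simp only [div_eq_mul_inv]
    exact da₂x.mul (dax.inv ha0x)
  have hsm : DifferentiableAt ℝ (fun y => (a₂ y / a y) • ω₂ y) x := hgx.smul dω₂x
  -- fderiv of the quotient, via a₂ = (a₂/a) * a near x
  have heq : (fun y => (a₂ y / a y) * a y) =ᶠ[nhds x] a₂ := by
    filter_upwards [hnx] with y hy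
    exact div_mul_cancel₀ _ (ha0 y hy)
  have hfd : ∀ w : V, fderiv ℝ (fun y => a₂ y / a y) x w
      = (fderiv ℝ a₂ x w - (a₂ x / a x) * fderiv ℝ a x w) / a x := by
    intro w
    have h1 : fderiv ℝ (fun y => (a₂ y / a y) * a y) x = fderiv ℝ a₂ x := heq.fderiv_eq
    have h2 : fderiv ℝ (fun y => (a₂ y / a y) * a y) x
        = (a₂ x / a x) • fderiv ℝ a x + a x • fderiv ℝ (fun y => a₂ y / a y) x :=
      fderiv_mul hgx dax
    have h3 := congrArg (fun (L : V →L[ℝ] ℝ) => L w) (h1.symm.trans h2)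
    simp only [ContinuousLinearMap.add_apply, ContinuousLinearMap.smul_apply,
      smul_eq_mul] at h3
    rw [eq_div_iff ha0x]
    linarith
  -- fderiv of θ - (a₂/a)•ω₂, evaluated
  have key : ∀ w z : V, (fderiv ℝ (fun y => θ y - (a₂ y / a y) • ω₂ y) x w) z
      = (fderiv ℝ θ x w) z - ((fderiv ℝ (fun y => a₂ y / a y) x w) * (ω₂ x z)
          + (a₂ x / a x) * (fderiv ℝ ω₂ x w) z) := by
    intro w z
    rw [fderiv_fun_sub dθx hsm, fderiv_fun_smul hgx dω₂x]
    simp only [ContinuousLinearMap.sub_apply, ContinuousLinearMap.add_apply,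
      ContinuousLinearMap.smul_apply, ContinuousLinearMap.smulRight_apply, smul_eq_mul]
    ring
  -- structure equations as scalar identities
  have hθuv : (fderiv ℝ θ x u) v = K x * wedge ω₁ ω₂ x u v + (fderiv ℝ θ x v) u := by
    have := hdθ x hx u v; simp only [dOne] at this; linarith
  have hω₂uv : (fderiv ℝ ω₂ x u) v = wedge ω₂ θ x u v + (fderiv ℝ ω₂ x v) u := by
    have := hs₂ x hx u v; simp only [dOne] at this; linarith
  have hdau := hda x hx u
  have hdav := hda x hx v
  have hda₂u : fderiv ℝ a₂ x u = a₂ x * θ x u + (a₁₂ x * ω₁ x u + a₂₂ x * ω₂ x u) := by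
    have := hda₂ x hx u; linarith
  have hda₂v : fderiv ℝ a₂ x v = a₂ x * θ x v + (a₁₂ x * ω₁ x v + a₂₂ x * ω₂ x v) := by
    have := hda₂ x hx v; linarith
  simp only [dOne]
  rw [key u v, key v u, hfd u, hfd v, hda₂u, hda₂v, hdau, hdav, hθuv, hω₂uv]
  simp only [wedge]
  field_simp
  ring
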